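/- arXiv:1606.00858 — 2 statements merged into one kernel-verified Lean document; each statement's English description precedes it below -/
import Mathlib

section
/- For fixed integers n, m ≥ 0 and threshold K, the function g(p,q) = Σ_{k+l < K} Bi(k; n, 1−p) Bi(l; m, 1−q) satisfies: if K ≥ 1 and n + m ≥ K, then g is strictly increasing in p on (0,1) whenever n ≥ 1, i.e., p < p' implies g(p,q) < g(p',q) for all q ∈ (0,1). -/
/-- Binomial probability mass function. -/
noncomputable def Bi (k n : ℕ) (p : ℝ) : ℝ :=
  (n.choose k : ℝ) * p ^ k * (1 - p) ^ (n - k)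

lemma Bi_nonneg {k n : ℕ} {p : ℝ} (h0 : 0 ≤ p) (h1 : p ≤ 1) : 0 ≤ Bi k n p := by
  unfold Bi
  have h2 : (0:ℝ) ≤ 1 - p := by linarith
  positivity

lemma Bi_pos {k n : ℕ} {p : ℝ} (hk : k ≤ n) (h0 : 0 < p) (h1 : p < 1) : 0 < Bi k n p := by
  unfold Bi
  have h2 : (0:ℝ) < 1 - p := by linarith
  have h3 : (0:ℝ) < (n.choose k : ℝ) := by exact_mod_cast Nat.choose_pos hk
  positivity

lemma hasDerivAt_Bi (k n : ℕ) (x : ℝ) :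
    HasDerivAt (fun p => Bi k n (1 - p))
      ((n.choose k : ℝ) * ((n - k : ℕ) : ℝ) * (1 - x) ^ k * x ^ (n - k - 1)
        - (n.choose k : ℝ) * (k : ℝ) * (1 - x) ^ (k - 1) * x ^ (n - k)) x := by
  have hfun : (fun p => Bi k n (1 - p)) =
      fun p : ℝ => (n.choose k : ℝ) * ((1 - p) ^ k * p ^ (n - k)) := by
    funext p
    unfold Bi
    rw [show (1:ℝ) - (1 - p) = p by ring]
    ring
  rw [hfun]
  have h1 : HasDerivAt (fun p : ℝ => (1 - p) ^ k) (-((k : ℝ) * (1 - x) ^ (k - 1))) x := by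
    have h := (hasDerivAt_pow k (1 - x)).comp x
      (((hasDerivAt_id x).const_sub (1:ℝ)))
    exact h.congr_deriv (by ring)
  have h2 : HasDerivAt (fun p : ℝ => p ^ (n - k)) (((n - k : ℕ) : ℝ) * x ^ (n - k - 1)) x :=
    hasDerivAt_pow (n - k) x
  have h := (h1.mul h2).const_mul ((n.choose k : ℝ))
  exact h.congr_deriv (by ring)

/-- Positivity of the derivative sum. -/
lemma key_pos (n m K : ℕ) (hK : 1 ≤ K) (hnm : K ≤ n + m) (hn : 1 ≤ n)
    (x q : ℝ) (hx : x ∈ Set.Ioo (0:ℝ) 1) (hq : q ∈ Set.Ioo (0:ℝ) 1) :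
    0 < ∑ k ∈ Finset.range K,
      ((n.choose k : ℝ) * ((n - k : ℕ) : ℝ) * (1 - x) ^ k * x ^ (n - k - 1)
        - (n.choose k : ℝ) * (k : ℝ) * (1 - x) ^ (k - 1) * x ^ (n - k))
        * (∑ l ∈ Finset.range (K - k), Bi l m (1 - q)) := by
  obtain ⟨hx0, hx1⟩ := hx
  obtain ⟨hq0, hq1⟩ := hq
  have hx2 : (0:ℝ) < 1 - x := by linarith
  have hq2 : (0:ℝ) < 1 - q := by linarith
  have hq3 : (1:ℝ) - q < 1 := by linarith
  set B : ℕ → ℝ := fun k => ∑ l ∈ Finset.range (K - k), Bi l m (1 - q) with hBdef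
  set D : ℕ → ℝ := fun k => (((n-1).choose k : ℝ)) * (1 - x) ^ k * x ^ (n - 1 - k) with hDdef
  have hBnn : ∀ k, 0 ≤ B k := fun k =>
    Finset.sum_nonneg fun l _ => Bi_nonneg (by linarith) (by linarith)
  have hDnn : ∀ k, 0 ≤ D k := by
    intro k
    have : (0:ℝ) ≤ ((n-1).choose k : ℝ) := Nat.cast_nonneg _
    positivity
  obtain ⟨K', rfl⟩ : ∃ K', K = K' + 1 := ⟨K - 1, by omega⟩
  -- term identity for the first part
  have hterm1 : ∀ k, (n.choose k : ℝ) * ((n - k : ℕ) : ℝ) * (1 - x) ^ k * x ^ (n - k - 1)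
      = (n:ℝ) * D k := by
    intro k
    have hnat : (n-1).choose k * n = n.choose k * (n - k) := by
      have := Nat.choose_mul_succ_eq (n-1) k
      rwa [show n - 1 + 1 = n by omega] at this
    have hcast : ((n-1).choose k : ℝ) * (n:ℝ) = (n.choose k : ℝ) * ((n - k : ℕ) : ℝ) := by
      exact_mod_cast congrArg (Nat.cast : ℕ → ℝ) hnat
    have hexp : n - k - 1 = n - 1 - k := by omega
    rw [hexp, hDdef]
    rw [← hcast]
    ring
  -- second part: telescoping
  have hterm2 : ∀ j, (n.choose (j+1) : ℝ) * ((j+1 : ℕ) : ℝ) * (1 - x) ^ (j+1-1) * x ^ (n - (j+1))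
      = (n:ℝ) * D j := by
    intro j
    have hnat : n * (n-1).choose j = n.choose (j+1) * (j+1) := by
      have := Nat.add_one_mul_choose_eq (n-1) j
      rwa [show n - 1 + 1 = n by omega] at this
    have hcast : (n:ℝ) * ((n-1).choose j : ℝ) = (n.choose (j+1) : ℝ) * ((j+1 : ℕ) : ℝ) := by
      exact_mod_cast congrArg (Nat.cast : ℕ → ℝ) hnat
    have hexp : n - (j+1) = n - 1 - j := by omega
    rw [show j + 1 - 1 = j from rfl, hexp, hDdef, ← hcast]
    push_cast
    ring
  -- rewrite the sum
  have hsplit : ∑ k ∈ Finset.range (K'+1),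
      ((n.choose k : ℝ) * ((n - k : ℕ) : ℝ) * (1 - x) ^ k * x ^ (n - k - 1)
        - (n.choose k : ℝ) * (k : ℝ) * (1 - x) ^ (k - 1) * x ^ (n - k)) * B k
      = (n:ℝ) * D K' * B K'
        + ∑ k ∈ Finset.range K', (n:ℝ) * D k * (B k - B (k+1)) := by
    have e1 : ∑ k ∈ Finset.range (K'+1),
        ((n.choose k : ℝ) * ((n - k : ℕ) : ℝ) * (1 - x) ^ k * x ^ (n - k - 1)) * B k
        = ∑ k ∈ Finset.range K', (n:ℝ) * D k * B k + (n:ℝ) * D K' * B K' := by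
      rw [Finset.sum_range_succ, hterm1]
      exact congrArg (· + (n:ℝ) * D K' * B K') (Finset.sum_congr rfl fun k _ => by rw [hterm1])
    have e2 : ∑ k ∈ Finset.range (K'+1),
        ((n.choose k : ℝ) * (k : ℝ) * (1 - x) ^ (k - 1) * x ^ (n - k)) * B k
        = ∑ k ∈ Finset.range K', (n:ℝ) * D k * B (k+1) := by
      rw [Finset.sum_range_succ']
      simp only [Nat.cast_zero, mul_zero, zero_mul, add_zero]
      exact Finset.sum_congr rfl fun j _ => by rw [hterm2 j]
    calc ∑ k ∈ Finset.range (K'+1),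
        ((n.choose k : ℝ) * ((n - k : ℕ) : ℝ) * (1 - x) ^ k * x ^ (n - k - 1)
          - (n.choose k : ℝ) * (k : ℝ) * (1 - x) ^ (k - 1) * x ^ (n - k)) * B k
        = ∑ k ∈ Finset.range (K'+1),
            (((n.choose k : ℝ) * ((n - k : ℕ) : ℝ) * (1 - x) ^ k * x ^ (n - k - 1)) * B k
             - ((n.choose k : ℝ) * (k : ℝ) * (1 - x) ^ (k - 1) * x ^ (n - k)) * B k) := by
          exact Finset.sum_congr rfl fun k _ => by ring
      _ = (∑ k ∈ Finset.range (K'+1),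
            ((n.choose k : ℝ) * ((n - k : ℕ) : ℝ) * (1 - x) ^ k * x ^ (n - k - 1)) * B k)
          - ∑ k ∈ Finset.range (K'+1),
            ((n.choose k : ℝ) * (k : ℝ) * (1 - x) ^ (k - 1) * x ^ (n - k)) * B k := by
          rw [Finset.sum_sub_distrib]
      _ = _ := by
          rw [e1, e2, add_sub_right_comm, ← Finset.sum_sub_distrib, add_comm]
          congr 1
          exact Finset.sum_congr rfl fun k _ => by ring
  rw [hsplit]
  -- B k - B (k+1) = Bi (K' - k) m (1 - q)
  have hBdiff : ∀ k ∈ Finset.range K', B k - B (k+1) = Bi (K' - k) m (1 - q) := by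
    intro k hk
    simp only [Finset.mem_range] at hk
    have h1 : K' + 1 - k = (K' - k) + 1 := by omega
    have h2 : K' + 1 - (k+1) = K' - k := by omega
    rw [hBdef]
    simp only
    rw [h1, h2, Finset.sum_range_succ]
    ring
  -- nonnegativity of all summands
  have hsumnn : 0 ≤ ∑ k ∈ Finset.range K', (n:ℝ) * D k * (B k - B (k+1)) := by
    refine Finset.sum_nonneg fun k hk => ?_
    rw [hBdiff k hk]
    have : 0 ≤ Bi (K' - k) m (1 - q) := Bi_nonneg (by linarith) (by linarith)
    have hn0 : (0:ℝ) ≤ n := Nat.cast_nonneg n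
    have := hDnn k
    positivity
  by_cases hKn : K' + 1 ≤ n
  · -- head term positive
    have hBK : B K' = Bi 0 m (1 - q) := by
      rw [hBdef]
      simp only
      rw [show K' + 1 - K' = 1 by omega, Finset.sum_range_one]
    have hBpos : 0 < B K' := by
      rw [hBK]; exact Bi_pos (Nat.zero_le m) hq2 hq3
    have hDpos : 0 < D K' := by
      rw [hDdef]
      have hc : 0 < (((n-1).choose K' : ℕ) : ℝ) := by
        exact_mod_cast Nat.choose_pos (by omega)
      positivity
    have hn0 : (0:ℝ) < n := by exact_mod_cast hn
    have : 0 < (n:ℝ) * D K' * B K' := by positivity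
    linarith
  · -- witness term n-1 in the tail sum
    push_neg at hKn
    have hmem : n - 1 ∈ Finset.range K' := Finset.mem_range.mpr (by omega)
    have hsumpos : 0 < ∑ k ∈ Finset.range K', (n:ℝ) * D k * (B k - B (k+1)) := by
      refine Finset.sum_pos' (fun k hk => ?_) ⟨n - 1, hmem, ?_⟩
      · rw [hBdiff k hk]
        have : 0 ≤ Bi (K' - k) m (1 - q) := Bi_nonneg (by linarith) (by linarith)
        have hn0 : (0:ℝ) ≤ n := Nat.cast_nonneg n
        have := hDnn k
        positivity
      · rw [hBdiff (n-1) hmem]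
        have hBipos : 0 < Bi (K' - (n-1)) m (1 - q) :=
          Bi_pos (by omega) hq2 hq3
        have hDpos : 0 < D (n-1) := by
          rw [hDdef]
          have hc : 0 < (((n-1).choose (n-1) : ℕ) : ℝ) := by
            exact_mod_cast Nat.choose_pos le_rfl
          positivity
        have hn0 : (0:ℝ) < n := by exact_mod_cast hn
        positivity
    have hhead : 0 ≤ (n:ℝ) * D K' * B K' := by
      have hn0 : (0:ℝ) ≤ n := Nat.cast_nonneg n
      have := hDnn K'
      have := hBnn K'
      positivity
    linarith

/-- Strict monotonicity in p of the binomial tail sum when the event is nontrivial. -/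
theorem binomial_tail_sum_strict_mono (n m K : ℕ)
    (hK : 1 ≤ K) (hnm : K ≤ n + m) (hn : 1 ≤ n)
    (p p' q : ℝ) (hp : p ∈ Set.Ioo (0 : ℝ) 1) (hp' : p' ∈ Set.Ioo (0 : ℝ) 1)
    (hq : q ∈ Set.Ioo (0 : ℝ) 1) (hpp : p < p') :
    (∑ k ∈ Finset.range K, ∑ l ∈ Finset.range (K - k),
        Bi k n (1 - p) * Bi l m (1 - q)) <
    (∑ k ∈ Finset.range K, ∑ l ∈ Finset.range (K - k),
        Bi k n (1 - p') * Bi l m (1 - q)) := by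
  set f : ℝ → ℝ := fun y => ∑ k ∈ Finset.range K,
      Bi k n (1 - y) * ∑ l ∈ Finset.range (K - k), Bi l m (1 - q) with hf
  have hrw : ∀ y : ℝ, (∑ k ∈ Finset.range K, ∑ l ∈ Finset.range (K - k),
      Bi k n (1 - y) * Bi l m (1 - q)) = f y := by
    intro y
    rw [hf]
    exact Finset.sum_congr rfl fun k _ => (Finset.mul_sum _ _ _).symm
  rw [hrw p, hrw p']
  have hderiv : ∀ x : ℝ, HasDerivAt f
      (∑ k ∈ Finset.range K,
        ((n.choose k : ℝ) * ((n - k : ℕ) : ℝ) * (1 - x) ^ k * x ^ (n - k - 1)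
          - (n.choose k : ℝ) * (k : ℝ) * (1 - x) ^ (k - 1) * x ^ (n - k))
          * ∑ l ∈ Finset.range (K - k), Bi l m (1 - q)) x := by
    intro x
    exact HasDerivAt.fun_sum fun k _ =>
      (hasDerivAt_Bi k n x).mul_const (∑ l ∈ Finset.range (K - k), Bi l m (1 - q))
  have hmono : StrictMonoOn f (Set.Ioo (0:ℝ) 1) := by
    apply strictMonoOn_of_deriv_pos (convex_Ioo 0 1)
    · exact fun x _ => ((hderiv x).differentiableAt.continuousAt).continuousWithinAt
    · intro x hx
      rw [interior_Ioo] at hx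
      rw [(hderiv x).deriv]
      exact key_pos n m K hK hnm hn x q hx hq
  exact hmono hp hp' hpp
end

section
/- Nonincreasing trajectories: For the ODE dμ/dt = F(μ) − μ on [0,1]^4 with μ(0) = 1, where F is continuous, monotone, and Lipschitz with F(1) ≤ 1, the solution μ(t) is componentwise nonincreasing in t and satisfies μ(t) ≥ F(μ(t)) componentwise for all t ≥ 0. -/
open Set Filter Topology

/-- Comparison lemma: a solution of `ẋ = F(x) − x` that starts below a supersolution
stays below it, for monotone Lipschitz `F`. -/
lemma key_comparison
    (F : (Fin 4 → ℝ) → Fin 4 → ℝ) (L : NNReal)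
    (hmono : Monotone F) (hlip : LipschitzWith L F)
    (g v w : ℝ → Fin 4 → ℝ)
    (hg : ∀ t, HasDerivAt g (F (g t) - g t) t)
    (hv : ∀ t, HasDerivAt v (w t) t)
    (hw : ∀ t, F (v t) - v t ≤ w t)
    (a : ℝ) (hab : g a ≤ v a) :
    ∀ t, a ≤ t → g t ≤ v t := by
  intro b hb
  set φ : ℝ → ℝ := fun t => ∑ i, max (g t i - v t i) 0 with hφdef
  have hgi : ∀ (t : ℝ) (i : Fin 4), HasDerivAt (fun z => g z i) ((F (g t) - g t) i) t :=
    fun t => hasDerivAt_pi.1 (hg t)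
  have hvi : ∀ (t : ℝ) (i : Fin 4), HasDerivAt (fun z => v z i) (w t i) t :=
    fun t => hasDerivAt_pi.1 (hv t)
  have hdi : ∀ (t : ℝ) (i : Fin 4),
      HasDerivAt (fun z => g z i - v z i) ((F (g t) - g t) i - w t i) t :=
    fun t i => (hgi t i).sub (hvi t i)
  have hφnn : ∀ t, 0 ≤ φ t := fun t => Finset.sum_nonneg fun i _ => le_max_right _ _
  have hterm_le : ∀ (t : ℝ) (i : Fin 4), max (g t i - v t i) 0 ≤ φ t := by
    intro t i
    exact Finset.single_le_sum (f := fun j => max (g t j - v t j) 0)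
      (fun j _ => le_max_right _ _) (Finset.mem_univ i)
  -- key estimate: F(g t) i − F(v t) i ≤ L φ t
  have hFest : ∀ (t : ℝ) (i : Fin 4), F (g t) i - F (v t) i ≤ (L : ℝ) * φ t := by
    intro t i
    set y : Fin 4 → ℝ := fun j => max (g t j) (v t j) with hy
    have h1 : F (g t) i ≤ F y i := hmono (fun j => le_max_left _ _) i
    have h2 : dist (F y) (F (v t)) ≤ (L : ℝ) * dist y (v t) := hlip.dist_le_mul _ _
    have h3 : F y i - F (v t) i ≤ dist (F y) (F (v t)) :=
      calc F y i - F (v t) i ≤ |F y i - F (v t) i| := le_abs_self _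
        _ = dist (F y i) (F (v t) i) := (Real.dist_eq _ _).symm
        _ ≤ dist (F y) (F (v t)) := dist_le_pi_dist _ _ i
    have h4 : dist y (v t) ≤ φ t := by
      rw [dist_pi_le_iff (hφnn t)]
      intro j
      have hyj : y j - v t j = max (g t j - v t j) 0 := by
        show g t j ⊔ v t j - v t j = _
        rw [← max_sub_sub_right, sub_self]
      rw [Real.dist_eq, hyj, abs_of_nonneg (le_max_right _ _)]
      exact hterm_le t j
    have h5 : (L : ℝ) * dist y (v t) ≤ (L : ℝ) * φ t :=
      mul_le_mul_of_nonneg_left h4 L.coe_nonneg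
    linarith
  have hcontφ : Continuous φ := by
    apply continuous_finset_sum
    intro i _
    have hgc : Continuous fun t => g t i := by
      rw [continuous_iff_continuousAt]; exact fun t => (hgi t i).continuousAt
    have hvc : Continuous fun t => v t i := by
      rw [continuous_iff_continuousAt]; exact fun t => (hvi t i).continuousAt
    exact (hgc.sub hvc).max continuous_const
  have hLφnn : ∀ t, 0 ≤ (L : ℝ) * φ t := fun t => mul_nonneg L.coe_nonneg (hφnn t)
  -- Grönwall
  have main := le_gronwallBound_of_liminf_deriv_right_le (f := φ)
    (f' := fun t => (4 * (L : ℝ)) * φ t) (δ := 0) (K := 4 * (L : ℝ)) (ε := 0) (a := a) (b := b)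
    hcontφ.continuousOn ?_ ?_ (fun x _ => by linarith [hφnn x])
  · have hφb : φ b ≤ 0 := by
      have := main b ⟨hb, le_refl b⟩
      rwa [gronwallBound_ε0_δ0] at this
    intro i
    have h1 : max (g b i - v b i) 0 ≤ 0 := le_trans (hterm_le b i) hφb
    have h2 : g b i - v b i ≤ max (g b i - v b i) 0 := le_max_left _ _
    linarith
  · -- slope condition
    intro t _ r hr
    apply Frequently.mono _ (fun z (h : (z - t)⁻¹ * (φ z - φ t) < r) => h)
    apply Eventually.frequently
    set ε : ℝ := (r - 4 * (L : ℝ) * φ t) / 4 with hε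
    have hεpos : 0 < ε := div_pos (by linarith) (by norm_num)
    have claim : ∀ i : Fin 4, ∀ᶠ z in 𝓝[>] t,
        (z - t)⁻¹ * (max (g z i - v z i) 0 - max (g t i - v t i) 0) < (L : ℝ) * φ t + ε := by
      intro i
      set d : ℝ → ℝ := fun z => g z i - v z i with hd
      by_cases hdt : d t < 0
      · -- eventually d z < 0, both maxes vanish
        have hdc : ContinuousAt d t := (hdi t i).continuousAt
        have hev : ∀ᶠ z in 𝓝 t, d z < 0 := hdc (Iio_mem_nhds hdt)
        apply eventually_nhdsWithin_of_eventually_nhds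
        filter_upwards [hev] with z hz
        rw [max_eq_right hz.le, max_eq_right hdt.le]
        simpa using lt_of_le_of_lt (hLφnn t) (lt_add_of_pos_right _ hεpos)
      · push_neg at hdt
        -- d t ≥ 0, derivative of d is ≤ L φ t
        have hd' : (F (g t) - g t) i - w t i ≤ (L : ℝ) * φ t := by
          have h1 := hFest t i
          have h2 : (F (v t) - v t) i ≤ w t i := hw t i
          have h3 : max (g t i - v t i) 0 = g t i - v t i := max_eq_left hdt
          have h4 := hterm_le t i
          have hdt' : (0 : ℝ) ≤ g t i - v t i := hdt
          simp only [Pi.sub_apply] at h2 ⊢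
          linarith
        have hslope : Tendsto (fun z => (z - t)⁻¹ * (d z - d t)) (𝓝[>] t)
            (𝓝 ((F (g t) - g t) i - w t i)) := by
          have := (hasDerivAt_iff_tendsto_slope.1 (hdi t i)).mono_left
            (nhdsWithin_mono t (fun z hz => ne_of_gt hz))
          apply this.congr
          intro z
          rw [slope_def_field, div_eq_inv_mul]
        have hev : ∀ᶠ z in 𝓝[>] t, (z - t)⁻¹ * (d z - d t) < (L : ℝ) * φ t + ε :=
          hslope (Iio_mem_nhds (lt_of_le_of_lt hd' (lt_add_of_pos_right _ hεpos)))
        filter_upwards [hev, self_mem_nhdsWithin] with z hz hzt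
        have hzt' : (0 : ℝ) < z - t := sub_pos.2 hzt
        have hmax : max (g z i - v z i) 0 - max (g t i - v t i) 0
            ≤ max (d z - d t) 0 := by
          rw [max_eq_left hdt]
          have hdt' : (0 : ℝ) ≤ g t i - v t i := hdt
          rcases le_total (g z i - v z i) 0 with h | h
          · rw [max_eq_right h]
            exact le_max_of_le_right (by linarith)
          · rw [max_eq_left h]
            exact le_max_left _ _
        calc (z - t)⁻¹ * (max (g z i - v z i) 0 - max (g t i - v t i) 0)
            ≤ (z - t)⁻¹ * max (d z - d t) 0 :=
              mul_le_mul_of_nonneg_left hmax (inv_nonneg.2 hzt'.le)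
          _ = max ((z - t)⁻¹ * (d z - d t)) ((z - t)⁻¹ * 0) := by
              rw [mul_max_of_nonneg _ _ (inv_nonneg.2 hzt'.le)]
          _ < (L : ℝ) * φ t + ε := by
              rw [mul_zero]
              exact max_lt hz (lt_of_le_of_lt (hLφnn t) (lt_add_of_pos_right _ hεpos))
    have hall : ∀ᶠ z in 𝓝[>] t, ∀ i : Fin 4,
        (z - t)⁻¹ * (max (g z i - v z i) 0 - max (g t i - v t i) 0) < (L : ℝ) * φ t + ε :=
      eventually_all.2 claim
    filter_upwards [hall] with z hz
    have hsum : (z - t)⁻¹ * (φ z - φ t)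
        = ∑ i, (z - t)⁻¹ * (max (g z i - v z i) 0 - max (g t i - v t i) 0) := by
      rw [hφdef]
      rw [← Finset.sum_sub_distrib, Finset.mul_sum]
    rw [hsum]
    have := Finset.sum_lt_sum_of_nonempty (s := (Finset.univ : Finset (Fin 4)))
      (by simp) (fun i _ => hz i)
    calc (∑ i : Fin 4, (z - t)⁻¹ * (max (g z i - v z i) 0 - max (g t i - v t i) 0))
        < ∑ _i : Fin 4, ((L : ℝ) * φ t + ε) := this
      _ = 4 * ((L : ℝ) * φ t + ε) := by
          rw [Finset.sum_const]; simp; ring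
      _ = r := by rw [hε]; ring
  · -- φ a ≤ 0
    have : φ a = 0 := by
      rw [hφdef]
      apply Finset.sum_eq_zero
      intro i _
      exact max_eq_right (sub_nonpos.2 (hab i))
    linarith

/-- Trajectories of μ̇ = F(μ) − μ started at 1 are componentwise nonincreasing
and remain in the region {μ : F(μ) ≤ μ}. -/
theorem cascade_ode_nonincreasing
    (F : (Fin 4 → ℝ) → Fin 4 → ℝ) (L : NNReal)
    (hcont : Continuous F) (hmono : Monotone F) (hlip : LipschitzWith L F)
    (hmaps : Set.MapsTo F (Set.Icc (0 : Fin 4 → ℝ) 1) (Set.Icc (0 : Fin 4 → ℝ) 1))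
    (hF1 : F 1 ≤ 1)
    (μc : ℝ → Fin 4 → ℝ) (h0 : μc 0 = 1)
    (hode : ∀ t : ℝ, HasDerivAt μc (F (μc t) - μc t) t) :
    (∀ s t : ℝ, 0 ≤ s → s ≤ t → μc t ≤ μc s) ∧
    (∀ t ≥ (0 : ℝ), F (μc t) ≤ μc t) := by
  -- Step 1: μc t ≤ 1 for t ≥ 0
  have hle1 : ∀ t, (0 : ℝ) ≤ t → μc t ≤ 1 := by
    apply key_comparison F L hmono hlip μc (fun _ => 1) (fun _ => 0) hode
      (fun t => hasDerivAt_const t 1)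
      (fun t => sub_nonpos.2 hF1)
    rw [h0]
  -- Step 2: monotonicity via time-shift comparison
  have hmono_t : ∀ s t : ℝ, 0 ≤ s → s ≤ t → μc t ≤ μc s := by
    intro s t hs hst
    have hshift : ∀ τ : ℝ, HasDerivAt (fun z => μc (z + (t - s)))
        (F (μc (τ + (t - s))) - μc (τ + (t - s))) τ :=
      fun τ => (hode (τ + (t - s))).comp_add_const τ (t - s)
    have h := key_comparison F L hmono hlip (fun z => μc (z + (t - s))) μc
      (fun τ => F (μc τ) - μc τ) hshift hode (fun τ => le_refl _) 0 ?_ s hs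
    · simpa [sub_add_cancel, add_comm, add_sub_cancel] using h
    · have : μc (0 + (t - s)) ≤ 1 := by
        rw [zero_add]; exact hle1 (t - s) (sub_nonneg.2 hst)
      rw [← h0] at this
      exact this
  refine ⟨hmono_t, ?_⟩
  -- Step 3: F(μc t) ≤ μc t from nonpositivity of the derivative
  intro t ht i
  have hdI : HasDerivAt (fun z => μc z i) ((F (μc t) - μc t) i) t :=
    hasDerivAt_pi.1 (hode t) i
  have hslope : Tendsto (fun z => (z - t)⁻¹ * (μc z i - μc t i)) (𝓝[>] t)
      (𝓝 ((F (μc t) - μc t) i)) := by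
    have := (hasDerivAt_iff_tendsto_slope.1 hdI).mono_left
      (nhdsWithin_mono t (fun z hz => ne_of_gt hz))
    apply this.congr
    intro z
    rw [slope_def_field, div_eq_inv_mul]
  have hnonpos : (F (μc t) - μc t) i ≤ 0 := by
    apply le_of_tendsto hslope
    filter_upwards [self_mem_nhdsWithin] with z hz
    have h1 : μc z i ≤ μc t i := hmono_t t z ht hz.le i
    have h2 : (0 : ℝ) < z - t := sub_pos.2 hz
    exact mul_nonpos_of_nonneg_of_nonpos (inv_nonneg.2 h2.le) (by linarith)
  have := hnonpos
  rw [Pi.sub_apply] at this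
  linarith
end
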